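/- If k₁ ≥ k₂ ≥ 0 (with k₂ > 0) and r > 0, then there exist constants ε ∈ (0,1) and C > 0 such that e^{-k₁ t} e_r^{\bar k₂ t} ≤ C e^{-ε (k₁ - k₂) t} for all t > 0, where \bar k₂ = k₂ e^{k₁ r} and e_r^{\bar k₂ t} is the delayed exponential function. -/

import Mathlib

open Real

noncomputable def delayedExp (r k : ℝ) (t : ℝ) : ℝ :=
  if t < -r then 0
  else if t < 0 then 1
  else ∑ j ∈ Finset.range (⌊t / r⌋.toNat + 2),
    k ^ j * (t - ((j : ℝ) - 1) * r) ^ j / (Nat.factorial j)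

noncomputable def A (k r : ℝ) (n : ℕ) (s : ℝ) : ℝ :=
  ∑ j ∈ Finset.range (n+1), k ^ j * (s - (j:ℝ) * r) ^ j / (Nat.factorial j)

lemma A_hasDerivAt (k r : ℝ) (n : ℕ) (s : ℝ) :
    HasDerivAt (A k r (n+1)) (k * A k r n (s - r)) s := by
  have h : ∀ j ∈ Finset.range (n+2),
      HasDerivAt (fun s => k ^ j * (s - (j:ℝ) * r) ^ j / (Nat.factorial j))
        (k ^ j * ((j:ℝ) * (s - (j:ℝ) * r) ^ (j-1)) / (Nat.factorial j)) s := by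
    intro j _
    have h1 : HasDerivAt (fun s : ℝ => (s - (j:ℝ)*r) ^ j)
        ((j:ℝ) * (s - (j:ℝ)*r) ^ (j-1)) s := by
      have := ((hasDerivAt_id s).sub_const ((j:ℝ)*r)).fun_pow j
      simpa using this
    simpa [mul_div_assoc] using (h1.const_mul (k ^ j)).div_const (Nat.factorial j)
  have hsum := HasDerivAt.fun_sum h
  refine hsum.congr_deriv ?_
  rw [Finset.sum_range_succ']
  simp only [pow_zero, Nat.cast_zero, zero_mul, mul_zero, zero_div, add_zero]
  rw [A, Finset.mul_sum]
  apply Finset.sum_congr rfl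
  intro j _
  have hf : ((Nat.factorial (j+1) : ℝ)) = ((j:ℝ)+1) * (Nat.factorial j : ℝ) := by
    rw [Nat.factorial_succ]; push_cast; ring
  have hfne : (Nat.factorial j : ℝ) ≠ 0 := Nat.cast_ne_zero.mpr (Nat.factorial_ne_zero j)
  have hb : (s - r - (j:ℝ) * r) = (s - ((j:ℕ)+1 : ℕ) * r) := by push_cast; ring
  push_cast [hf]
  rw [show (s - ((j:ℝ)+1)*r) = (s - r - (j:ℝ)*r) by ring]
  have hj1 : ((j:ℝ)+1) ≠ 0 := by positivity
  field_simp
  ring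

lemma A_le (k r μ : ℝ) (hr : 0 < r) (hμ : 0 ≤ μ) (hk : 0 ≤ k)
    (hkμ : k ≤ μ * Real.exp (μ * r)) :
    ∀ n : ℕ, ∀ s : ℝ, (n : ℝ) * r ≤ s → A k r n s ≤ Real.exp (μ * s) := by
  intro n
  induction n with
  | zero =>
    intro s hs
    simp only [Nat.cast_zero, zero_mul] at hs
    have h1 : A k r 0 s = 1 := by simp [A]
    have := Real.add_one_le_exp (μ * s)
    nlinarith [mul_nonneg hμ hs]
  | succ n ih =>
    intro s hs
    set a : ℝ := ((n:ℝ)+1) * r with ha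
    have has : a ≤ s := by push_cast at hs; linarith
    -- value at a
    have hAa : A k r (n+1) a ≤ Real.exp (μ * a) := by
      have : A k r (n+1) a = A k r n a := by
        rw [A, A, Finset.sum_range_succ]
        have : (a - ((n:ℕ)+1:ℕ) * r) = 0 := by push_cast; ring
        rw [this]
        simp
      rw [this]
      exact ih a (by nlinarith)
    -- monotonicity of g = exp - A on [a, ∞)
    set g : ℝ → ℝ := fun s => Real.exp (μ * s) - A k r (n+1) s with hg
    have hgd : ∀ x : ℝ, HasDerivAt g (μ * Real.exp (μ * x) - k * A k r n (x - r)) x := by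
      intro x
      have h1 : HasDerivAt (fun s => Real.exp (μ * s)) (μ * Real.exp (μ * x)) x := by
        simpa [mul_comm, Function.comp_def] using (Real.hasDerivAt_exp (μ*x)).comp x ((hasDerivAt_id x).const_mul μ)
      exact h1.sub (A_hasDerivAt k r n x)
    have hmono : MonotoneOn g (Set.Ici a) := by
      apply monotoneOn_of_deriv_nonneg (convex_Ici a)
      · exact fun x _ => ((hgd x).continuousAt).continuousWithinAt
      · intro x hx
        exact ((hgd x).differentiableAt).differentiableWithinAt
      · intro x hx
        rw [interior_Ici] at hx
        rw [(hgd x).deriv]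
        have hxr : (n : ℝ) * r ≤ x - r := by
          have : a < x := hx
          push_cast at this ⊢
          nlinarith
        have h2 : A k r n (x - r) ≤ Real.exp (μ * (x - r)) := ih _ hxr
        have h3 : k * A k r n (x - r) ≤ k * Real.exp (μ * (x - r)) :=
          mul_le_mul_of_nonneg_left h2 hk
        have h4 : k * Real.exp (μ * (x - r)) ≤ μ * Real.exp (μ * r) * Real.exp (μ * (x-r)) :=
          mul_le_mul_of_nonneg_right hkμ (Real.exp_nonneg _)
        have h5 : μ * Real.exp (μ * r) * Real.exp (μ * (x-r)) = μ * Real.exp (μ * x) := by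
          rw [mul_assoc, ← Real.exp_add]; ring_nf
        linarith
    have := hmono (Set.self_mem_Ici) (Set.mem_Ici.mpr has) has
    simp only [hg] at this
    linarith

theorem stmt_4 (r k₁ k₂ : ℝ) (hr : 0 < r) (hk₁ : k₁ ≥ k₂) (hk₂ : k₂ > 0) :
    ∃ ε ∈ Set.Ioo (0 : ℝ) 1, ∃ C > (0 : ℝ), ∀ t > (0 : ℝ),
      Real.exp (-k₁ * t) * delayedExp r (k₂ * Real.exp (k₁ * r)) t ≤
        C * Real.exp (-ε * (k₁ - k₂) * t) := by
  have hk1 : 0 < k₁ := lt_of_lt_of_le hk₂ hk₁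
  set d : ℝ := k₁ - k₂ with hdd
  have hd : 0 ≤ d := sub_nonneg.mpr hk₁
  have hden : (0:ℝ) < 1 + k₁ * r := by nlinarith
  set ε : ℝ := 1 / (2 * (1 + k₁ * r)) with hεd
  have hε0 : 0 < ε := by positivity
  have hε1 : ε < 1 := by
    rw [hεd, div_lt_one (by positivity)]; nlinarith
  set δ : ℝ := ε * d with hδd
  have hδ0 : 0 ≤ δ := mul_nonneg hε0.le hd
  have hδhalf : δ * (1 + k₁ * r) = d / 2 := by
    rw [hδd, hεd]; field_simp
  set μ : ℝ := k₁ - δ with hμd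
  have hδled : δ ≤ d / 2 := by nlinarith [mul_nonneg hδ0 (mul_nonneg hk1.le hr.le)]
  have hμk2 : k₂ ≤ μ := by rw [hμd]; linarith [hδled]
  have hμ0 : 0 ≤ μ := le_trans hk₂.le hμk2
  have hμk1 : μ ≤ k₁ := by rw [hμd]; linarith
  -- key inequality
  have hkey : k₂ * Real.exp (k₁ * r) ≤ μ * Real.exp (μ * r) := by
    have he : Real.exp (μ * r) = Real.exp (k₁ * r) * Real.exp (-δ * r) := by
      rw [← Real.exp_add, hμd]; ring_nf
    have h1 : (-δ * r) + 1 ≤ Real.exp (-δ * r) := Real.add_one_le_exp _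
    have h2 : k₂ ≤ μ * (1 - δ * r) := by nlinarith
    have h3 : μ * (1 - δ * r) ≤ μ * Real.exp (-δ * r) := by nlinarith
    calc k₂ * Real.exp (k₁ * r) ≤ (μ * Real.exp (-δ * r)) * Real.exp (k₁ * r) := by
          have := Real.exp_pos (k₁ * r)
          nlinarith
      _ = μ * Real.exp (μ * r) := by rw [he]; ring
  refine ⟨ε, ⟨hε0, hε1⟩, Real.exp (k₁ * r), Real.exp_pos _, ?_⟩
  intro t ht
  set k : ℝ := k₂ * Real.exp (k₁ * r) with hkd
  have hk0 : 0 ≤ k := by positivity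
  set N : ℕ := (⌊t / r⌋).toNat with hNd
  -- delayedExp equals A
  have heq : delayedExp r k t = A k r (N + 1) (t + r) := by
    rw [delayedExp, if_neg (by linarith), if_neg (by linarith), A]
    apply Finset.sum_congr rfl
    intro j _
    congr 2
    ring
  have hfloor : ((N:ℝ) + 1) * r ≤ t + r := by
    have h0 : (0:ℤ) ≤ ⌊t / r⌋ := Int.floor_nonneg.mpr (by positivity)
    have : ((N:ℝ)) = ((⌊t / r⌋ : ℤ) : ℝ) := by
      rw [hNd]; exact_mod_cast Int.toNat_of_nonneg h0
    have h2 : ((⌊t / r⌋ : ℤ) : ℝ) ≤ t / r := Int.floor_le _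
    have h3 : (N:ℝ) * r ≤ (t / r) * r := by
      rw [this]; exact mul_le_mul_of_nonneg_right h2 hr.le
    rw [div_mul_cancel₀ _ hr.ne'] at h3
    linarith
  have hbound : delayedExp r k t ≤ Real.exp (μ * (t + r)) := by
    rw [heq]
    exact A_le k r μ hr hμ0 hk0 hkey (N + 1) (t + r) (by push_cast; linarith)
  calc Real.exp (-k₁ * t) * delayedExp r k t
      ≤ Real.exp (-k₁ * t) * Real.exp (μ * (t + r)) :=
        mul_le_mul_of_nonneg_left hbound (Real.exp_nonneg _)
    _ = Real.exp (μ * r) * Real.exp ((μ - k₁) * t) := by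
        rw [← Real.exp_add, ← Real.exp_add]; ring_nf
    _ ≤ Real.exp (k₁ * r) * Real.exp (-ε * (k₁ - k₂) * t) := by
        have e1 : Real.exp (μ * r) ≤ Real.exp (k₁ * r) :=
          Real.exp_le_exp.mpr (mul_le_mul_of_nonneg_right hμk1 hr.le)
        have e2 : (μ - k₁) * t = -ε * (k₁ - k₂) * t := by rw [hμd, hδd, hdd]; ring
        rw [e2]
        exact mul_le_mul_of_nonneg_right e1 (Real.exp_nonneg _)
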